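/- Let W be a finite Coxeter group with longest element w₀ and Bruhat order ≤, and let H be its Iwahori–Hecke algebra over a field k with parameter q, with basis (T_w). Let δ : H → k be the linear form sending Σ a_w T_w to a_{w₀}. Then for all v, w ∈ W: δ(T_w · T_{w⁻¹w₀}) = 1, and δ(T_v · T_{w⁻¹w₀}) = 0 unless w ≤ v in the Bruhat order. In particular, the matrix (δ(T_v T_{w⁻¹w₀}))_{v,w∈W} is invertible (lower unitriangular with respect to Bruhat order), and H is a Frobenius algebra with Frobenius form δ. -/

import Mathlib

/-- The Bruhat order on a Coxeter group: `w ≤ v` iff some reduced word for `v` contains a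
subword whose product is `w`. -/
def BruhatLE {B W : Type} [Group W] {M : CoxeterMatrix B} (cs : CoxeterSystem M W)
    (w v : W) : Prop :=
  ∃ l l' : List B, cs.wordProd l = v ∧ l.length = cs.length v ∧
    l'.Sublist l ∧ cs.wordProd l' = w



open List CoxeterSystem

namespace Stmt13

variable {B W : Type} [Group W] [DecidableEq W] {M : CoxeterMatrix B} (cs : CoxeterSystem M W)

local prefix:100 "ℓ" => cs.length
local prefix:100 "π" => cs.wordProd
local prefix:100 "ss" => cs.simple

/-- The reflection-sign permutation module map. -/
def sigmaFun (i : B) (x : W × ZMod 2) : W × ZMod 2 :=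
  (ss i * x.1 * ss i, x.2 + if x.1 = ss i then 1 else 0)

lemma sigmaFun_invol (i : B) : Function.Involutive (sigmaFun cs i) := by
  rintro ⟨t, e⟩
  have hiff : ss i * t * ss i = ss i ↔ t = ss i := by
    constructor
    · intro h
      have := congrArg (fun z => ss i * z * ss i) h
      simpa [mul_assoc] using this
    · rintro rfl; simp
  simp only [sigmaFun, Prod.ext_iff, hiff]
  constructor
  · simp [mul_assoc]
  · have h2 : (1 : ZMod 2) + 1 = 0 := by decide
    by_cases h : t = ss i <;> simp [h, add_assoc, h2]

def sigma (i : B) : Equiv.Perm (W × ZMod 2) :=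
  (sigmaFun_invol cs i).toPerm _

lemma sigma_apply (i : B) (t : W) (e : ZMod 2) :
    sigma cs i (t, e) = (ss i * t * ss i, e + if t = ss i then 1 else 0) := rfl

lemma prod_sigma_apply (ω : List B) (t : W) (e : ZMod 2) :
    (ω.map (sigma cs)).prod (t, e)
      = (π ω * t * (π ω)⁻¹, e + ((cs.rightInvSeq ω).count t : ZMod 2)) := by
  induction ω generalizing t e with
  | nil => simp
  | cons i ω ih =>
    have hris : cs.rightInvSeq (i :: ω) = ((π ω)⁻¹ * ss i * π ω) :: cs.rightInvSeq ω := rfl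
    rw [List.map_cons, List.prod_cons, Equiv.Perm.mul_apply, ih, sigma_apply, hris,
      List.count_cons, wordProd_cons, Prod.ext_iff]
    have hiff : π ω * t * (π ω)⁻¹ = ss i ↔ (π ω)⁻¹ * ss i * π ω = t := by
      constructor
      · intro h; rw [← h]; group
      · intro h; rw [← h]; group
    constructor
    · simp [mul_assoc]
    · simp only [hiff]
      push_cast
      by_cases h : (π ω)⁻¹ * ss i * π ω = t <;> simp [h] <;> ring
-- part 2 : liftability
lemma conj_pow_helper {G : Type*} [Group G] (a b : G) (hb : b * b = 1) (e : ℕ) :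
    b * (a * b) ^ e = (b * a) ^ e * b := by
  induction e with
  | zero => simp
  | succ e ih =>
    rw [pow_succ, ← mul_assoc, ih, pow_succ]
    group

lemma inv_ab_pow {G : Type*} [Group G] (a b : G) (ha : a * a = 1) (hb : b * b = 1) (e : ℕ) :
    ((a * b) ^ e)⁻¹ = (b * a) ^ e := by
  rw [← inv_pow]
  congr 1
  rw [mul_inv_rev, inv_eq_of_mul_eq_one_right ha, inv_eq_of_mul_eq_one_right hb]

lemma dihedral_conj {G : Type*} [Group G] (a b : G) (ha : a * a = 1) (hb : b * b = 1) (n : ℕ) :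
    ((if Even n then (1:G) else b) * (a * b) ^ (n / 2))⁻¹ * (if Even n then b else a)
      * ((if Even n then (1:G) else b) * (a * b) ^ (n / 2)) = (b * a) ^ n * b := by
  have hbinv : b⁻¹ = b := inv_eq_of_mul_eq_one_right hb
  rcases Nat.even_or_odd n with he | ho
  · obtain ⟨e, rfl⟩ := he
    have hdiv : (e + e) / 2 = e := by omega
    rw [if_pos (Even.add_self e), if_pos (Even.add_self e), hdiv, one_mul,
      inv_ab_pow a b ha hb, mul_assoc, conj_pow_helper a b hb, ← mul_assoc, ← pow_add]
  · have hne : ¬ Even n := Nat.not_even_iff_odd.2 ho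
    obtain ⟨e, rfl⟩ := ho
    have hdiv : (2 * e + 1) / 2 = e := by omega
    rw [if_neg hne, if_neg hne, hdiv, mul_inv_rev, inv_ab_pow a b ha hb, hbinv]
    have step : b * (a * (b * (a * b) ^ e)) = (b * a) ^ (e + 1) * b := by
      have : b * (a * b) ^ (e + 1) = (b * a) ^ (e + 1) * b := conj_pow_helper a b hb (e + 1)
      rw [← this, pow_succ']
      group
    rw [mul_assoc, mul_assoc, step, ← mul_assoc, ← pow_add]
    have hee : e + (e + 1) = 2 * e + 1 := by omega
    rw [hee]

lemma head_conj (i i' : B) (n : ℕ) :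
    (π (alternatingWord i i' n))⁻¹ * ss (if Even n then i' else i) * π (alternatingWord i i' n)
      = (ss i' * ss i) ^ n * ss i' := by
  rw [cs.prod_alternatingWord_eq_mul_pow, apply_ite (cs.simple)]
  exact dihedral_conj (ss i) (ss i') (cs.simple_mul_simple_self i)
    (cs.simple_mul_simple_self i') n

lemma ris_alt (i i' : B) (n : ℕ) :
    cs.rightInvSeq (alternatingWord i i' n)
      = (List.range n).map (fun j => (ss i' * ss i) ^ (n - 1 - j) * ss i') := by
  induction n with
  | zero => simp [alternatingWord]
  | succ n ih =>
    rw [alternatingWord_succ' i i']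
    have hris : cs.rightInvSeq ((if Even n then i' else i) :: alternatingWord i i' n)
        = ((π (alternatingWord i i' n))⁻¹ * ss (if Even n then i' else i)
            * π (alternatingWord i i' n)) :: cs.rightInvSeq (alternatingWord i i' n) := rfl
    rw [hris, head_conj cs i i' n, ih, List.range_succ_eq_map, List.map_cons, List.map_map]
    congr 1
    refine List.map_congr_left fun a ha => ?_
    simp only [Function.comp_apply, Nat.succ_eq_add_one]
    congr 2
    omega

lemma count_ris_braid_even (i i' : B) (t : W) :
    ∃ c, (cs.rightInvSeq (alternatingWord i i' (2 * M i i'))).count t = c + c := by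
  rw [ris_alt]
  have hper : (ss i' * ss i) ^ M i i' = 1 := by
    have h := cs.simple_mul_simple_pow i' i
    rwa [M.symmetric i' i] at h
  have h2m : 2 * M i i' = M i i' + M i i' := by omega
  rw [h2m, List.range_add, List.map_append]
  have heq : List.map (fun j => (ss i' * ss i) ^ (M i i' + M i i' - 1 - j) * ss i')
        (List.map (fun j => M i i' + j) (List.range (M i i')))
      = List.map (fun j => (ss i' * ss i) ^ (M i i' + M i i' - 1 - j) * ss i')
        (List.range (M i i')) := by
    rw [List.map_map]
    apply List.map_congr_left
    intro j hj
    rw [List.mem_range] at hj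
    simp only [Function.comp_apply]
    congr 1
    have h1 : M i i' + M i i' - 1 - (M i i' + j) = M i i' - 1 - j := by omega
    have h2 : M i i' + M i i' - 1 - j = (M i i' - 1 - j) + M i i' := by omega
    rw [h1, h2, pow_add, hper, mul_one]
  rw [heq, List.count_append]
  exact ⟨_, rfl⟩

lemma liftable : M.IsLiftable (sigma cs) := by
  intro i i'
  have halt : ∀ m : ℕ, ((alternatingWord i i' (2 * m)).map (sigma cs)).prod
      = (sigma cs i * sigma cs i') ^ m := by
    intro m
    induction m with
    | zero => simp [alternatingWord]
    | succ m ih =>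
      have h1 : 2 * (m + 1) = (2 * m) + 1 + 1 := by omega
      rw [h1, alternatingWord_succ' i i', alternatingWord_succ' i i']
      have he : Even (2 * m) := even_two_mul m
      rw [if_neg (by simp [Nat.even_add_one, he]), if_pos he]
      rw [List.map_cons, List.map_cons, List.prod_cons, List.prod_cons, ih, pow_succ']
      rw [← mul_assoc]
  rw [← halt]
  apply Equiv.ext
  rintro ⟨t, e⟩
  rw [prod_sigma_apply]
  have hπ : π (alternatingWord i i' (2 * M i i')) = 1 := by
    rw [cs.prod_alternatingWord_eq_mul_pow]
    have hd : 2 * M i i' / 2 = M i i' := by omega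
    rw [if_pos (even_two_mul _), hd, one_mul]
    exact cs.simple_mul_simple_pow i i'
  obtain ⟨c, hc⟩ := count_ris_braid_even cs i i' t
  rw [hπ, hc]
  push_cast
  have hcc : (c : ZMod 2) + c = 0 := by
    have h2 : (2 : ZMod 2) = 0 := by decide
    rw [← two_mul, h2, zero_mul]
  simp [hcc]

-- part 3 : eta and inversions

noncomputable def phi : W →* Equiv.Perm (W × ZMod 2) :=
  cs.lift ⟨sigma cs, liftable cs⟩

noncomputable def eta (w t : W) : ZMod 2 := ((phi cs w) (t, 0)).2

lemma phi_wordProd (ω : List B) : phi cs (π ω) = (ω.map (sigma cs)).prod := by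
  unfold wordProd
  rw [MonoidHom.map_list_prod, List.map_map]
  congr 1
  apply List.map_congr_left
  intro i _
  simp only [Function.comp_apply]
  exact cs.lift_apply_simple (liftable cs) i

lemma eta_eq_count (ω : List B) (t : W) :
    eta cs (π ω) t = ((cs.rightInvSeq ω).count t : ZMod 2) := by
  unfold eta
  rw [phi_wordProd, prod_sigma_apply]
  simp

lemma phi_apply (w t : W) (e : ZMod 2) :
    (phi cs w) (t, e) = (w * t * w⁻¹, e + eta cs w t) := by
  obtain ⟨ω, _, rfl⟩ := cs.exists_reduced_word w
  rw [phi_wordProd, prod_sigma_apply, eta_eq_count]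

lemma eta_one (t : W) : eta cs 1 t = 0 := by
  unfold eta
  simp

lemma eta_mul (u v t : W) : eta cs (u * v) t = eta cs v t + eta cs u (v * t * v⁻¹) := by
  have h := phi_apply cs (u * v) t 0
  rw [map_mul, Equiv.Perm.mul_apply, phi_apply, phi_apply] at h
  have h2 := congrArg Prod.snd h
  simp only [zero_add] at h2
  exact h2.symm

lemma eta_simple_self (i : B) : eta cs (ss i) (ss i) = 1 := by
  have h := eta_eq_count cs [i] (ss i)
  rw [cs.wordProd_singleton] at h
  rw [h, cs.rightInvSeq_singleton]
  simp

lemma eta_refl_self {t : W} (ht : cs.IsReflection t) : eta cs t t = 1 := by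
  obtain ⟨u, i, rfl⟩ := ht
  have key0 : eta cs u⁻¹ (u * ss i * u⁻¹) + eta cs u (ss i) = 0 := by
    have h := eta_mul cs u u⁻¹ (u * ss i * u⁻¹)
    have e1 : u⁻¹ * (u * ss i * u⁻¹) * u⁻¹⁻¹ = ss i := by group
    rw [mul_inv_cancel, eta_one, e1] at h
    exact h.symm
  have hsplit : u * ss i * u⁻¹ = u * (ss i * u⁻¹) := by group
  have e2 : (ss i * u⁻¹) * (u * ss i * u⁻¹) * (ss i * u⁻¹)⁻¹ = ss i := by
    simp [mul_assoc]
  have e3 : u⁻¹ * (u * ss i * u⁻¹) * u⁻¹⁻¹ = ss i := by group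
  have step1 : eta cs (u * ss i * u⁻¹) (u * ss i * u⁻¹)
      = eta cs (ss i * u⁻¹) (u * ss i * u⁻¹) + eta cs u (ss i) := by
    nth_rewrite 1 [hsplit]
    rw [eta_mul, e2]
  have step2 : eta cs (ss i * u⁻¹) (u * ss i * u⁻¹)
      = eta cs u⁻¹ (u * ss i * u⁻¹) + 1 := by
    rw [eta_mul, e3, eta_simple_self]
  rw [step1, step2]
  linear_combination key0

lemma zmod2_cases (x : ZMod 2) : x = 0 ∨ x = 1 := by revert x; decide

lemma eta_one_of_inversion {t : W} (w : W)
    (h : eta cs w t = 1) : ℓ (w * t) < ℓ w := by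
  obtain ⟨ω, hlen, hw⟩ := cs.exists_reduced_word w
  have hred : cs.IsReduced ω := by
    show cs.length (π ω) = ω.length
    rw [← hw]
    rw [hw]; exact hlen
  rw [hw, eta_eq_count] at h
  have hmem : t ∈ cs.rightInvSeq ω := by
    by_contra hmem
    rw [List.count_eq_zero_of_not_mem hmem] at h
    simp at h
  have := cs.isRightInversion_of_mem_rightInvSeq hred hmem
  rw [← hw] at this
  exact this.2

lemma eta_eq_one_iff {t : W} (ht : cs.IsReflection t) (w : W) :
    eta cs w t = 1 ↔ ℓ (w * t) < ℓ w := by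
  constructor
  · exact eta_one_of_inversion cs w
  · intro hlt
    have h0 : eta cs (w * t) t = 0 := by
      rcases zmod2_cases (eta cs (w * t) t) with h | h
      · exact h
      · exfalso
        have := eta_one_of_inversion cs (w * t) h
        rw [mul_assoc, ht.mul_self, mul_one] at this
        omega
    have hrw : eta cs w t = eta cs (w * t * t) t := by
      rw [mul_assoc, ht.mul_self, mul_one]
    rw [hrw, eta_mul]
    have htt : t * t * t⁻¹ = t := by rw [ht.mul_self, one_mul, ht.inv]
    rw [htt, eta_refl_self cs ht, h0, add_zero]

lemma mem_ris_of_inversion {t : W} {ω : List B} (hred : cs.IsReduced ω)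
    (hinv : cs.IsRightInversion (π ω) t) : t ∈ cs.rightInvSeq ω := by
  have h1 : eta cs (π ω) t = 1 := (eta_eq_one_iff cs hinv.1 (π ω)).2 hinv.2
  rw [eta_eq_count] at h1
  by_contra hmem
  rw [List.count_eq_zero_of_not_mem hmem] at h1
  simp at h1

-- part 4 : counting inversions, longest element
open scoped Classical

open Finset in
lemma card_inversions [Fintype W] (w : W) :
    (Finset.univ.filter (fun t => cs.IsRightInversion w t)).card = ℓ w := by
  classical
  obtain ⟨ω, hlen, hw⟩ := cs.exists_reduced_word w
  have hred : cs.IsReduced ω := by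
    show cs.length (π ω) = ω.length
    rw [← hw]
    rw [hw]; exact hlen
  have hset : Finset.univ.filter (fun t => cs.IsRightInversion w t)
      = (cs.rightInvSeq ω).toFinset := by
    ext t
    simp only [Finset.mem_filter, Finset.mem_univ, true_and, List.mem_toFinset]
    constructor
    · intro hinv
      rw [hw] at hinv
      exact mem_ris_of_inversion cs hred hinv
    · intro hmem
      rw [hw]
      exact cs.isRightInversion_of_mem_rightInvSeq hred hmem
  rw [hset, List.toFinset_card_of_nodup (hred.nodup_rightInvSeq), cs.length_rightInvSeq, hw]; exact hlen.symm

lemma key_length [Fintype W] (w₀ : W) (hw₀ : ∀ w : W, ℓ w ≤ ℓ w₀) (u : W) :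
    ℓ u + ℓ (u⁻¹ * w₀) = ℓ w₀ := by
  classical
  set b := u⁻¹ * w₀ with hb
  have hub : u * b = w₀ := by rw [hb]; group
  -- every reflection is an inversion of w₀
  have hw₀inv : ∀ t : W, cs.IsReflection t → cs.IsRightInversion w₀ t := by
    intro t ht
    exact ⟨ht, lt_of_le_of_ne (hw₀ (w₀ * t)) (ht.length_mul_left_ne w₀)⟩
  have hW0 : Finset.univ.filter (fun t => cs.IsRightInversion w₀ t)
      = Finset.univ.filter (fun t => cs.IsReflection t) := by
    ext t
    simp only [Finset.mem_filter, Finset.mem_univ, true_and]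
    exact ⟨fun h => h.1, fun h => hw₀inv t h⟩
  -- the eta identity
  have hsum : ∀ t : W, cs.IsReflection t →
      eta cs b t + eta cs u (b * t * b⁻¹) = 1 := by
    intro t ht
    have := eta_mul cs u b t
    rw [hub] at this
    rw [← this]
    exact (eta_eq_one_iff cs ht w₀).2 (hw₀inv t ht).2
  set Tf := Finset.univ.filter (fun t => cs.IsReflection t) with hTf
  set Nb := Finset.univ.filter (fun t => cs.IsRightInversion b t) with hNb
  set Df := Tf.filter (fun t => cs.IsRightInversion u (b * t * b⁻¹)) with hDf
  have hNbTf : Nb ⊆ Tf := by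
    intro t htmem
    simp only [hNb, hTf, Finset.mem_filter, Finset.mem_univ, true_and] at *
    exact htmem.1
  have hdisj : Disjoint Nb Df := by
    rw [Finset.disjoint_left]
    intro t htN htD
    simp only [hNb, hDf, hTf, Finset.mem_filter, Finset.mem_univ, true_and] at htN htD
    have h1 : eta cs b t = 1 := (eta_eq_one_iff cs htN.1 b).2 htN.2
    have h2 : eta cs u (b * t * b⁻¹) = 1 :=
      (eta_eq_one_iff cs htD.2.1 u).2 htD.2.2
    have := hsum t htN.1
    rw [h1, h2] at this
    exact absurd this (by decide)
  have hunion : Nb ∪ Df = Tf := by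
    ext t
    simp only [hNb, hDf, hTf, Finset.mem_union, Finset.mem_filter, Finset.mem_univ, true_and]
    constructor
    · rintro (h | h)
      · exact h.1
      · exact h.1
    · intro ht
      have h := hsum t ht
      rcases zmod2_cases (eta cs b t) with h1 | h1
      · right
        rw [h1, zero_add] at h
        exact ⟨ht, ht.conj b, eta_one_of_inversion cs u h⟩
      · left
        exact ⟨ht, eta_one_of_inversion cs b h1⟩
  have hcard : Tf.card = Nb.card + Df.card := by
    rw [← hunion, Finset.card_union_of_disjoint hdisj]
  set Nu := Finset.univ.filter (fun t => cs.IsRightInversion u t) with hNu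
  have hDfcard : Df.card = Nu.card := by
    apply Finset.card_bij (fun t _ => b * t * b⁻¹)
    · intro t htmem
      simp only [hDf, hTf, Finset.mem_filter, Finset.mem_univ, true_and] at htmem
      simp only [hNu, Finset.mem_filter, Finset.mem_univ, true_and]
      exact htmem.2
    · intro t1 h1 t2 h2 heq
      have := mul_left_cancel (mul_right_cancel heq)
      exact this
    · intro t' ht'
      simp only [hNu, Finset.mem_filter, Finset.mem_univ, true_and] at ht'
      refine ⟨b⁻¹ * t' * b, ?_, by group⟩
      simp only [hDf, hTf, Finset.mem_filter, Finset.mem_univ, true_and]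
      constructor
      · have := ht'.1.conj b⁻¹
        rwa [inv_inv] at this
      · have hre : b * (b⁻¹ * t' * b) * b⁻¹ = t' := by group
        rw [hre]
        exact ht'
  have final : ℓ w₀ = ℓ b + ℓ u := by
    calc ℓ w₀ = (Finset.univ.filter (fun t => cs.IsRightInversion w₀ t)).card :=
        (card_inversions cs w₀).symm
      _ = Tf.card := by rw [hW0]
      _ = Nb.card + Df.card := hcard
      _ = Nb.card + Nu.card := by rw [hDfcard]
      _ = ℓ b + ℓ u := by rw [hNb, hNu, card_inversions cs b, card_inversions cs u]
  omega

-- part 5 : Hecke algebra lemmas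
section Hecke

variable {k : Type} [Field k] {H : Type} [Ring H] [Algebra k H]

lemma tprod (T : Module.Basis W k H) (hone : T 1 = 1)
    (hbraid : ∀ v w : W, ℓ (v * w) = ℓ v + ℓ w → T v * T w = T (v * w)) :
    ∀ l : List B, cs.IsReduced l → (l.map (fun i => T (cs.simple i))).prod = T (π l) := by
  intro l
  induction l with
  | nil => intro _; simpa using hone.symm
  | cons i l ih =>
    intro hred
    have hredl : cs.IsReduced l := by
      have := hred.drop 1
      simpa using this
    have hlen : ℓ (cs.simple i * π l) = ℓ (cs.simple i) + ℓ (π l) := by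
      have h1 : ℓ (π (i :: l)) = l.length + 1 := by
        rw [hred]
        simp
      rw [cs.wordProd_cons] at h1
      rw [h1, cs.length_simple, hredl]
      omega
    rw [List.map_cons, List.prod_cons, ih hredl, hbraid _ _ hlen, cs.wordProd_cons]

lemma hecke_step (T : Module.Basis W k H) (q : k)
    (hbraid : ∀ v w : W, ℓ (v * w) = ℓ v + ℓ w → T v * T w = T (v * w))
    (hquad : ∀ i : B, T (cs.simple i) * T (cs.simple i)
      = (q - 1) • T (cs.simple i) + q • (1 : H))
    (i : B) (l : List B) (u : W) (x : H)
    (hx : x ∈ Submodule.span k {x : H | ∃ l', l'.Sublist l ∧ x = T (cs.wordProd l' * u)}) :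
    T (cs.simple i) * x
      ∈ Submodule.span k {x : H | ∃ l', l'.Sublist (i :: l) ∧ x = T (cs.wordProd l' * u)} := by
  have hmap := Submodule.mem_map_of_mem (f := LinearMap.mulLeft k (T (cs.simple i))) hx
  rw [Submodule.map_span] at hmap
  have hle : Submodule.span k (⇑(LinearMap.mulLeft k (T (cs.simple i)))
        '' {x : H | ∃ l', l'.Sublist l ∧ x = T (cs.wordProd l' * u)})
      ≤ Submodule.span k {x : H | ∃ l', l'.Sublist (i :: l) ∧ x = T (cs.wordProd l' * u)} := by
    rw [Submodule.span_le]
    rintro y ⟨x', ⟨l', hsub, rfl⟩, rfl⟩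
    simp only [LinearMap.mulLeft_apply, SetLike.mem_coe]
    rcases cs.length_simple_mul (cs.wordProd l' * u) i with hadd | hsub2
    · have hb : T (cs.simple i) * T (cs.wordProd l' * u)
          = T (cs.simple i * (cs.wordProd l' * u)) := by
        apply hbraid
        rw [hadd, cs.length_simple]
        omega
      rw [hb]
      apply Submodule.subset_span
      exact ⟨i :: l', hsub.cons₂ i, by rw [cs.wordProd_cons, mul_assoc]⟩
    · have hzy : cs.simple i * (cs.simple i * (cs.wordProd l' * u)) = cs.wordProd l' * u := by
        rw [← mul_assoc, cs.simple_mul_simple_self, one_mul]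
      have hlz : ℓ (cs.simple i * (cs.simple i * (cs.wordProd l' * u)))
          = ℓ (cs.simple i) + ℓ (cs.simple i * (cs.wordProd l' * u)) := by
        rw [hzy, cs.length_simple]
        omega
      have hTz : T (cs.simple i) * T (cs.simple i * (cs.wordProd l' * u))
          = T (cs.wordProd l' * u) := by
        rw [hbraid _ _ hlz, hzy]
      have expand : T (cs.simple i) * T (cs.wordProd l' * u)
          = (q - 1) • T (cs.wordProd l' * u)
            + q • T (cs.simple i * (cs.wordProd l' * u)) := by
        rw [← hTz, ← mul_assoc, hquad i, add_mul, smul_mul_assoc, smul_mul_assoc, one_mul, hTz]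
      rw [expand]
      apply Submodule.add_mem
      · exact Submodule.smul_mem _ _ (Submodule.subset_span ⟨l', hsub.cons i, rfl⟩)
      · exact Submodule.smul_mem _ _
          (Submodule.subset_span ⟨i :: l', hsub.cons₂ i, by rw [cs.wordProd_cons, mul_assoc]⟩)
  exact hle hmap

lemma hecke_span (T : Module.Basis W k H) (q : k)
    (hbraid : ∀ v w : W, ℓ (v * w) = ℓ v + ℓ w → T v * T w = T (v * w))
    (hquad : ∀ i : B, T (cs.simple i) * T (cs.simple i)
      = (q - 1) • T (cs.simple i) + q • (1 : H)) :
    ∀ (l : List B) (u : W), (l.map fun i => T (cs.simple i)).prod * T u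
      ∈ Submodule.span k {x : H | ∃ l', l'.Sublist l ∧ x = T (cs.wordProd l' * u)} := by
  intro l
  induction l with
  | nil =>
    intro u
    rw [List.map_nil, List.prod_nil, one_mul]
    exact Submodule.subset_span ⟨[], List.nil_sublist _, by simp⟩
  | cons i l ih =>
    intro u
    rw [List.map_cons, List.prod_cons, mul_assoc]
    exact hecke_step cs T q hbraid hquad i l u _ (ih u)

end Hecke

lemma bruhat_length {w v : W} (h : BruhatLE cs w v) : w = v ∨ ℓ w < ℓ v := by
  obtain ⟨l, l', hlv, hlen, hsub, hlw⟩ := h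
  by_cases hll : l' = l
  · left
    rw [← hlw, hll, hlv]
  · right
    have h1 : l'.length < l.length := by
      rcases Nat.lt_or_ge l'.length l.length with h | h
      · exact h
      · exfalso
        exact hll (hsub.eq_of_length (le_antisymm hsub.length_le h))
    calc ℓ w = ℓ (π l') := by rw [hlw]
      _ ≤ l'.length := cs.length_wordProd_le l'
      _ < l.length := h1
      _ = ℓ v := hlen

end Stmt13

/-- let `W` be a finite Coxeter group with longest element `w₀`, `H` its
Iwahori–Hecke algebra over a field `k` with parameter `q`, and `δ : H → k` the linear form
picking the coefficient of `T_{w₀}`.  Then `δ(T_w T_{w⁻¹w₀}) = 1` for all `w`, and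
`δ(T_v T_{w⁻¹w₀}) = 0` unless `w ≤ v` in the Bruhat order; in particular the matrix
`(δ(T_v T_{w⁻¹w₀}))_{v,w}` is invertible and `H` is a Frobenius algebra with Frobenius
form `δ` (the bilinear form `(a,b) ↦ δ(ab)` is nondegenerate). -/
theorem stmt13 {B W : Type} [Group W] [Fintype W] [DecidableEq W] {M : CoxeterMatrix B}
    (cs : CoxeterSystem M W)
    (k : Type) [Field k] (q : k) (H : Type) [Ring H] [Algebra k H]
    (T : Module.Basis W k H)
    (hone : T 1 = 1)
    (hbraid : ∀ v w : W,
      cs.length (v * w) = cs.length v + cs.length w → T v * T w = T (v * w))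
    (hquad : ∀ i : B,
      T (cs.simple i) * T (cs.simple i) = (q - 1) • T (cs.simple i) + q • (1 : H))
    (w₀ : W) (hw₀ : ∀ w : W, cs.length w ≤ cs.length w₀) :
    (∀ w : W, T.repr (T w * T (w⁻¹ * w₀)) w₀ = 1) ∧
      (∀ v w : W, ¬ BruhatLE cs w v → T.repr (T v * T (w⁻¹ * w₀)) w₀ = 0) ∧
      IsUnit (Matrix.of fun v w : W => T.repr (T v * T (w⁻¹ * w₀)) w₀) ∧
      (∀ a : H, (∀ b : H, T.repr (a * b) w₀ = 0) → a = 0) ∧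
      (∀ b : H, (∀ a : H, T.repr (a * b) w₀ = 0) → b = 0) := by
  classical
  have key := Stmt13.key_length cs w₀ hw₀
  -- diagonal entries
  have hdiag : ∀ w : W, T.repr (T w * T (w⁻¹ * w₀)) w₀ = 1 := by
    intro w
    have hadd : cs.length (w * (w⁻¹ * w₀)) = cs.length w + cs.length (w⁻¹ * w₀) := by
      rw [mul_inv_cancel_left]
      exact (key w).symm
    rw [hbraid _ _ hadd, mul_inv_cancel_left, T.repr_self, Finsupp.single_eq_same]
  -- vanishing entries
  have hvan : ∀ v w : W, ¬ BruhatLE cs w v → T.repr (T v * T (w⁻¹ * w₀)) w₀ = 0 := by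
    intro v w hnb
    obtain ⟨l, hlen, hv⟩ := cs.exists_reduced_word v
    have hred : cs.IsReduced l := by
      show cs.length (cs.wordProd l) = l.length
      rw [← hv]
      rw [hv]; exact hlen
    have hprod := Stmt13.tprod cs T hone hbraid l hred
    have hmem := Stmt13.hecke_span cs T q hbraid hquad l (w⁻¹ * w₀)
    rw [hprod, ← hv] at hmem
    set lam : H →ₗ[k] k := (Finsupp.lapply w₀).comp T.repr.toLinearMap with hlam
    have hker : Submodule.span k
          {x : H | ∃ l', l'.Sublist l ∧ x = T (cs.wordProd l' * (w⁻¹ * w₀))}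
        ≤ LinearMap.ker lam := by
      rw [Submodule.span_le]
      rintro x ⟨l', hsub, rfl⟩
      simp only [SetLike.mem_coe, LinearMap.mem_ker, hlam, LinearMap.comp_apply,
        LinearEquiv.coe_coe, Finsupp.lapply_apply]
      have hy : cs.wordProd l' * (w⁻¹ * w₀) ≠ w₀ := by
        intro heq
        apply hnb
        have hw₀' : w * (w⁻¹ * w₀) = w₀ := by rw [mul_inv_cancel_left]
        have hlw : cs.wordProd l' = w := by
          apply mul_right_cancel (b := w⁻¹ * w₀)
          rw [heq, hw₀']
        exact ⟨l, l', hv.symm, (by rw [hv]; exact hlen.symm), hsub, hlw⟩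
      rw [T.repr_self]
      exact Finsupp.single_eq_of_ne hy.symm
    have hx := hker hmem
    rw [LinearMap.mem_ker, hlam] at hx
    simpa using hx
  -- matrix
  set Mx : Matrix W W k := Matrix.of (fun v w : W => T.repr (T v * T (w⁻¹ * w₀)) w₀) with hMx
  have hNE : Nonempty W := ⟨1⟩
  have hC : 0 < Fintype.card W := Fintype.card_pos
  set eF := Fintype.equivFin W with heF
  set f : W → ℕ := fun w => Fintype.card W * cs.length w + (eF w : ℕ) with hf
  have hmono : ∀ a b : W, cs.length a < cs.length b → f a < f b := by
    intro a b hab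
    have h1 : (eF a : ℕ) < Fintype.card W := (eF a).isLt
    have h2 : Fintype.card W * (cs.length a + 1) ≤ Fintype.card W * cs.length b :=
      Nat.mul_le_mul_left _ hab
    calc f a = Fintype.card W * cs.length a + (eF a : ℕ) := rfl
      _ < Fintype.card W * (cs.length a + 1) := by rw [Nat.mul_succ]; omega
      _ ≤ Fintype.card W * cs.length b := h2
      _ ≤ f b := Nat.le_add_right _ _
  have hinj : Function.Injective f := by
    intro a b hab
    have hll : cs.length a = cs.length b := by
      by_contra hne
      rcases Nat.lt_or_ge (cs.length a) (cs.length b) with h | h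
      · exact absurd hab (Nat.ne_of_lt (hmono a b h))
      · rcases Nat.lt_or_ge (cs.length b) (cs.length a) with h' | h'
        · exact absurd hab.symm (Nat.ne_of_lt (hmono b a h'))
        · omega
    have hval : (eF a : ℕ) = (eF b : ℕ) := by
      have : f a = f b := hab
      rw [hf] at this
      simp only [hll] at this
      omega
    have : eF a = eF b := Fin.ext hval
    exact eF.injective this
  letI lo : LinearOrder W := LinearOrder.lift' f hinj
  have hlt_iff : ∀ a b : W, a < b → f a < f b := fun a b h => h
  have htri : Mx.BlockTriangular OrderDual.toDual := by
    intro v u hvu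
    have hvu' : v < u := hvu
    have hfvu : f v < f u := hlt_iff v u hvu'
    show T.repr (T v * T (u⁻¹ * w₀)) w₀ = 0
    apply hvan
    intro hb
    rcases Stmt13.bruhat_length cs hb with heq | hlt
    · rw [heq] at hfvu
      omega
    · have := hmono u v hlt
      omega
  have hdet : Mx.det = 1 := by
    rw [Matrix.det_of_lowerTriangular Mx htri]
    apply Finset.prod_eq_one
    intro v _
    exact hdiag v
  have hunit : IsUnit Mx := (Matrix.isUnit_iff_isUnit_det Mx).2 (hdet ▸ isUnit_one)
  -- expansions
  have hexpand_left : ∀ (a : H) (u : W),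
      T.repr (a * T u) w₀ = ∑ v, T.repr a v * T.repr (T v * T u) w₀ := by
    intro a u
    conv_lhs => rw [← T.sum_repr a]
    rw [Finset.sum_mul, map_sum, Finset.sum_apply']
    apply Finset.sum_congr rfl
    intro v _
    rw [smul_mul_assoc, map_smul, Finsupp.smul_apply, smul_eq_mul]
  have hexpand_right : ∀ (a c : H),
      T.repr (a * c) w₀ = ∑ u, T.repr c u * T.repr (a * T u) w₀ := by
    intro a c
    conv_lhs => rw [← T.sum_repr c]
    rw [Finset.mul_sum, map_sum, Finset.sum_apply']
    apply Finset.sum_congr rfl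
    intro u _
    rw [mul_smul_comm, map_smul, Finsupp.smul_apply, smul_eq_mul]
  have hdetu : IsUnit Mx.det := (Matrix.isUnit_iff_isUnit_det Mx).1 hunit
  refine ⟨hdiag, hvan, hunit, ?_, ?_⟩
  · -- left nondegeneracy
    intro a ha
    have hv : Matrix.vecMul (fun v => T.repr a v) Mx = 0 := by
      funext w
      have h1 := ha (T (w⁻¹ * w₀))
      rw [hexpand_left a (w⁻¹ * w₀)] at h1
      show ∑ v, T.repr a v * Mx v w = 0
      exact h1
    have h0 : (fun v => T.repr a v) = 0 := by
      have hMinv := Matrix.mul_nonsing_inv Mx hdetu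
      calc (fun v => T.repr a v) = Matrix.vecMul (fun v => T.repr a v) 1 := by
            rw [Matrix.vecMul_one]
        _ = Matrix.vecMul (fun v => T.repr a v) (Mx * Mx⁻¹) := by rw [hMinv]
        _ = Matrix.vecMul (Matrix.vecMul (fun v => T.repr a v) Mx) Mx⁻¹ := by
            rw [Matrix.vecMul_vecMul]
        _ = Matrix.vecMul 0 Mx⁻¹ := by rw [hv]
        _ = 0 := Matrix.zero_vecMul _
    have hrepr : T.repr a = 0 := Finsupp.ext fun v => congrFun h0 v
    exact T.repr.map_eq_zero_iff.mp hrepr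
  · -- right nondegeneracy
    intro b hb
    set Nx : Matrix W W k := Matrix.of (fun v u : W => T.repr (T v * T u) w₀) with hNx
    set g : Equiv.Perm W := (Equiv.inv W).trans (Equiv.mulLeft w₀) with hg
    have hNM : Nx = Mx.submatrix id g := by
      ext v u
      show T.repr (T v * T u) w₀ = T.repr (T v * T ((g u)⁻¹ * w₀)) w₀
      have : (g u)⁻¹ * w₀ = u := by
        show (w₀ * u⁻¹)⁻¹ * w₀ = u
        group
      rw [this]
    have hdetN : IsUnit Nx.det := by
      rw [hNM, Matrix.det_permute' g Mx, hdet]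
      rcases Int.units_eq_one_or (Equiv.Perm.sign g) with hs | hs <;>
        rw [hs] <;> simp
    have hv : Matrix.mulVec Nx (fun u => T.repr b u) = 0 := by
      funext v
      have h1 := hb (T v)
      rw [hexpand_right (T v) b] at h1
      show ∑ u, Nx v u * T.repr b u = 0
      rw [← h1]
      apply Finset.sum_congr rfl
      intro u _
      rw [mul_comm]
      rfl
    have h0 : (fun u => T.repr b u) = 0 := by
      have hNinv := Matrix.nonsing_inv_mul Nx hdetN
      calc (fun u => T.repr b u) = Matrix.mulVec 1 (fun u => T.repr b u) := by
            rw [Matrix.one_mulVec]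
        _ = Matrix.mulVec (Nx⁻¹ * Nx) (fun u => T.repr b u) := by rw [hNinv]
        _ = Matrix.mulVec Nx⁻¹ (Matrix.mulVec Nx (fun u => T.repr b u)) := by
            rw [Matrix.mulVec_mulVec]
        _ = Matrix.mulVec Nx⁻¹ 0 := by rw [hv]
        _ = 0 := Matrix.mulVec_zero _
    have hrepr : T.repr b = 0 := Finsupp.ext fun u => congrFun h0 u
    exact T.repr.map_eq_zero_iff.mp hrepr
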